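/- Every PPT bipartite state has low fidelity with the maximally entangled state: if ρ_AB is a density matrix on ℂ^d ⊗ ℂ^d whose partial transpose ρ^{T_B} is positive semidefinite, then ⟨Φ|ρ|Φ⟩ ≤ 1/d, where |Φ⟩ = (1/√d)Σ_i |ii⟩. -/

import Mathlib

open Matrix BigOperators
open scoped ComplexOrder

/-- Partial transpose on the second tensor factor:
`(A ⊗ B)^{T_B} = A ⊗ Bᵀ`, extended linearly. -/
def ptransposeSnd {A B : Type*}
    (M : Matrix (A × B) (A × B) ℂ) : Matrix (A × B) (A × B) ℂ :=
  Matrix.of fun p q => M (p.1, q.2) (q.1, p.2)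

/-- The maximally entangled unit vector `|Φ⟩ = (1/√d) Σ_i |ii⟩`. -/
noncomputable def mesVec (d : ℕ) : Fin d × Fin d → ℂ :=
  fun p => if p.1 = p.2 then (1 / (Real.sqrt d : ℂ)) else 0

/-- For a PSD matrix, the real part of any entry is bounded by the average of
the corresponding diagonal entries. -/
lemma psd_re_le {n : Type*} [Fintype n] [DecidableEq n] {M : Matrix n n ℂ}
    (hM : M.PosSemidef) (p q : n) :
    (M p q).re ≤ ((M p p).re + (M q q).re) / 2 := by
  by_cases hpq : p = q
  · subst hpq; linarith
  · set x : n → ℂ := Pi.single p 1 - Pi.single q 1 with hx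
    have h := hM.dotProduct_mulVec_nonneg x
    have hs : star x = Pi.single p 1 - Pi.single q 1 := by
      funext a; rw [hx]; simp [Pi.single_apply]
    have hval : star x ⬝ᵥ M.mulVec x = M p p - M p q - M q p + M q q := by
      rw [hx, hs, mulVec_sub, sub_dotProduct, dotProduct_sub, dotProduct_sub]
      simp [single_dotProduct, mulVec_single]
      ring
    rw [hval] at h
    have hherm : M q p = star (M p q) := by
      conv_lhs => rw [← hM.1]
      simp [conjTranspose_apply]
    have h0 : 0 ≤ (M p p - M p q - M q p + M q q).re := (Complex.le_def.mp h).1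
    simp [hherm, Complex.sub_re, Complex.add_re, Complex.conj_re] at h0
    linarith

/-- Every PPT state has fidelity at most `1/d` with the maximally entangled
state: if `ρ` is a state on `ℂ^d ⊗ ℂ^d` with positive semidefinite partial
transpose, then `⟨Φ|ρ|Φ⟩ ≤ 1/d`. -/
theorem ppt_fidelity_le (d : ℕ) (hd : 0 < d)
    (ρ : Matrix (Fin d × Fin d) (Fin d × Fin d) ℂ)
    (hρ : ρ.PosSemidef) (hρtr : ρ.trace = 1)
    (hppt : (ptransposeSnd ρ).PosSemidef) :
    (star (mesVec d) ⬝ᵥ ρ.mulVec (mesVec d)).re ≤ 1 / d := by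
  -- Step 1: compute the fidelity as `(1/d) Σ_{i,j} ρ_{(i,i),(j,j)}`.
  have hsum : star (mesVec d) ⬝ᵥ ρ.mulVec (mesVec d)
      = (1/(d:ℂ)) * ∑ i, ∑ j, ρ (i,i) (j,j) := by
    have hc2 : ((Real.sqrt d : ℂ))⁻¹ * ((Real.sqrt d : ℂ))⁻¹ = ((d:ℂ))⁻¹ := by
      rw [← mul_inv, ← Complex.ofReal_mul, Real.mul_self_sqrt (Nat.cast_nonneg d)]
      push_cast; ring
    simp only [dotProduct, mulVec, mesVec, Pi.star_apply, Fintype.sum_prod_type,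
      apply_ite (starRingEnd ℂ), star_zero, mul_ite, ite_mul, zero_mul, mul_zero]
    simp [hc2, Finset.mul_sum, Finset.sum_mul, apply_ite (starRingEnd ℂ), mul_ite, ite_mul,
      Finset.sum_ite_eq, Finset.sum_ite_eq', mul_comm, mul_left_comm, mul_assoc]
  rw [hsum]
  have hcast : (1/(d:ℂ)) = ((1/(d:ℝ) : ℝ) : ℂ) := by push_cast; ring
  rw [hcast, Complex.re_ofReal_mul]
  -- Step 2: the sum of real parts is at most 1, using PSD of the partial transpose.
  have hre : (∑ i, ∑ j, ρ (i,i) (j,j)).re = ∑ i, ∑ j, (ρ (i,i) (j,j)).re := by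
    rw [Complex.re_sum]; exact Finset.sum_congr rfl fun i _ => Complex.re_sum _ _
  have hbound : ∀ i j : Fin d, (ρ (i,i) (j,j)).re
      ≤ ((ρ ((i,j)) ((i,j))).re + (ρ ((j,i)) ((j,i))).re) / 2 := by
    intro i j
    have := psd_re_le hppt (i, j) (j, i)
    simpa [ptransposeSnd] using this
  have htr : ∑ i : Fin d, ∑ j : Fin d, (ρ ((i,j)) ((i,j))).re = 1 := by
    have : ρ.trace.re = 1 := by rw [hρtr]; simp
    rw [← this, trace, Complex.re_sum]
    rw [Fintype.sum_prod_type]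
    rfl
  have hS : ∑ i, ∑ j, (ρ (i,i) (j,j)).re ≤ 1 := by
    calc ∑ i, ∑ j, (ρ (i,i) (j,j)).re
        ≤ ∑ i : Fin d, ∑ j : Fin d,
            ((ρ ((i,j)) ((i,j))).re + (ρ ((j,i)) ((j,i))).re) / 2 :=
          Finset.sum_le_sum fun i _ => Finset.sum_le_sum fun j _ => hbound i j
      _ = 1 := by
          have hcomm : (∑ i : Fin d, ∑ j : Fin d, (ρ ((j,i)) ((j,i))).re)
              = ∑ i : Fin d, ∑ j : Fin d, (ρ ((i,j)) ((i,j))).re := by rw [Finset.sum_comm]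
          have hsplit : ∑ i : Fin d, ∑ j : Fin d,
                ((ρ ((i,j)) ((i,j))).re + (ρ ((j,i)) ((j,i))).re) / 2
              = ((∑ i : Fin d, ∑ j : Fin d, (ρ ((i,j)) ((i,j))).re)
                  + ∑ i : Fin d, ∑ j : Fin d, (ρ ((j,i)) ((j,i))).re) / 2 := by
            simp [Finset.sum_add_distrib, Finset.sum_div, add_div]
          rw [hsplit, hcomm, htr]; norm_num
  rw [hre]
  have hd' : (0:ℝ) ≤ 1/(d:ℝ) := by positivity
  have := mul_le_mul_of_nonneg_left hS hd'
  simpa using this
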